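/- Let G be a finite simple graph containing eight distinct vertices v0, h, l1, m, l3, r1, r3, b such that the induced subgraph of G on X = {v0, h, l1, m, l3, r1, r3, b} has edge set exactly the union of the 4-cycle v0 l3 b r3, the 5-cycle v0 h l1 m l3, and the 5-cycle v0 h r1 m r3 (that is, exactly the 11 edges v0l3, l3b, br3, r3v0, v0h, hl1, l1m, ml3, hr1, r1m, mr3), and such that deg_G(v0) = deg_G(l1) = deg_G(r1) = 3 and deg_G(h) = deg_G(m) = deg_G(l3) = deg_G(r3) = deg_G(b) = 4. If G − X is (2,1)-decomposable, then G is (2,1)-decomposable. -/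

import Mathlib

/-- A graph `G` is `d`-degenerate if every nonempty (induced) subgraph has a
vertex of degree at most `d`. -/
def SimpleGraph.DegenerateLE {V : Type*} (G : SimpleGraph V) (d : ℕ) : Prop :=
  ∀ S : Set V, S.Nonempty → ∃ v ∈ S, (S ∩ G.neighborSet v).ncard ≤ d

/-- A graph `G` is `(d, h)`-decomposable if there is a subgraph `H` of `G` with
maximum degree at most `h` such that `G - E(H)` is `d`-degenerate. -/
def SimpleGraph.IsDecomposable {V : Type*} (G : SimpleGraph V) (d h : ℕ) : Prop :=
  ∃ H : SimpleGraph V, H ≤ G ∧ (∀ v, (H.neighborSet v).ncard ≤ h) ∧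
    (G \ H).DegenerateLE d

/-- Reducible 'light 3-vertex' configuration of Figure 4(d): a 4-cycle
`v₀ l₃ b r₃` together with the 5-cycles `v₀ h l₁ m l₃` and `v₀ h r₁ m r₃`
sharing the vertex `m`, inducing exactly these eleven edges. -/
theorem statement10 {V : Type*} [Fintype V] (G : SimpleGraph V)
    (v₀ h l₁ m l₃ r₁ r₃ b : V)
    (hne : [v₀, h, l₁, m, l₃, r₁, r₃, b].Pairwise (· ≠ ·))
    (hind : ∀ x ∈ ({v₀, h, l₁, m, l₃, r₁, r₃, b} : Set V),
      ∀ y ∈ ({v₀, h, l₁, m, l₃, r₁, r₃, b} : Set V),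
      (G.Adj x y ↔ s(x, y) ∈
        ({s(v₀, l₃), s(l₃, b), s(b, r₃), s(r₃, v₀), s(v₀, h), s(h, l₁), s(l₁, m),
          s(m, l₃), s(h, r₁), s(r₁, m), s(m, r₃)} : Set (Sym2 V))))
    (hdv₀ : (G.neighborSet v₀).ncard = 3) (hdh : (G.neighborSet h).ncard = 4)
    (hdl₁ : (G.neighborSet l₁).ncard = 3) (hdm : (G.neighborSet m).ncard = 4)
    (hdl₃ : (G.neighborSet l₃).ncard = 4) (hdr₁ : (G.neighborSet r₁).ncard = 3)
    (hdr₃ : (G.neighborSet r₃).ncard = 4) (hdb : (G.neighborSet b).ncard = 4)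
    (hdec : (G.induce (({v₀, h, l₁, m, l₃, r₁, r₃, b} : Set V)ᶜ)).IsDecomposable 2 1) :
    G.IsDecomposable 2 1 := by
  classical
  simp only [List.pairwise_cons, List.mem_cons, List.not_mem_nil, or_false,
    List.Pairwise.nil, forall_eq_or_imp, forall_eq] at hne
  obtain ⟨⟨nv₀h, nv₀l₁, nv₀m, nv₀l₃, nv₀r₁, nv₀r₃, nv₀b⟩,
    ⟨nhl₁, nhm, nhl₃, nhr₁, nhr₃, nhb⟩,
    ⟨nl₁m, nl₁l₃, nl₁r₁, nl₁r₃, nl₁b⟩,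
    ⟨nml₃, nmr₁, nmr₃, nmb⟩,
    ⟨nl₃r₁, nl₃r₃, nl₃b⟩,
    ⟨nr₁r₃, nr₁b⟩, nr₃b⟩ := hne
  set X : Set V := {v₀, h, l₁, m, l₃, r₁, r₃, b} with hXdef
  have hv₀X : v₀ ∈ X := by simp [hXdef]
  have hhX : h ∈ X := by simp [hXdef]
  have hl₁X : l₁ ∈ X := by simp [hXdef]
  have hmX : m ∈ X := by simp [hXdef]
  have hl₃X : l₃ ∈ X := by simp [hXdef]
  have hr₁X : r₁ ∈ X := by simp [hXdef]
  have hr₃X : r₃ ∈ X := by simp [hXdef]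
  have hbX : b ∈ X := by simp [hXdef]
  have a1 : G.Adj v₀ l₃ := (hind v₀ hv₀X l₃ hl₃X).2 (by simp)
  have a2 : G.Adj l₃ b := (hind l₃ hl₃X b hbX).2 (by simp)
  have a3 : G.Adj b r₃ := (hind b hbX r₃ hr₃X).2 (by simp)
  have a4 : G.Adj r₃ v₀ := (hind r₃ hr₃X v₀ hv₀X).2 (by simp)
  have a5 : G.Adj v₀ h := (hind v₀ hv₀X h hhX).2 (by simp)
  have a6 : G.Adj h l₁ := (hind h hhX l₁ hl₁X).2 (by simp)
  have a7 : G.Adj l₁ m := (hind l₁ hl₁X m hmX).2 (by simp)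
  have a8 : G.Adj m l₃ := (hind m hmX l₃ hl₃X).2 (by simp)
  have a9 : G.Adj h r₁ := (hind h hhX r₁ hr₁X).2 (by simp)
  have a10 : G.Adj r₁ m := (hind r₁ hr₁X m hmX).2 (by simp)
  have a11 : G.Adj m r₃ := (hind m hmX r₃ hr₃X).2 (by simp)
  obtain ⟨H', hH'le, hH'deg, hH'dgn⟩ := hdec
  let H : SimpleGraph V :=
    { Adj := fun x y =>
        ((x = v₀ ∧ y = h) ∨ (x = h ∧ y = v₀) ∨ (x = l₁ ∧ y = m) ∨ (x = m ∧ y = l₁)) ∨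
        ∃ (hx : x ∈ Xᶜ) (hy : y ∈ Xᶜ), H'.Adj ⟨x, hx⟩ ⟨y, hy⟩
      symm := by
        constructor
        rintro x y ((⟨rfl, rfl⟩ | ⟨rfl, rfl⟩ | ⟨rfl, rfl⟩ | ⟨rfl, rfl⟩) | ⟨hx, hy, hadj⟩)
        · exact Or.inl (Or.inr (Or.inl ⟨rfl, rfl⟩))
        · exact Or.inl (Or.inl ⟨rfl, rfl⟩)
        · exact Or.inl (Or.inr (Or.inr (Or.inr ⟨rfl, rfl⟩)))
        · exact Or.inl (Or.inr (Or.inr (Or.inl ⟨rfl, rfl⟩)))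
        · exact Or.inr ⟨hy, hx, hadj.symm⟩
      loopless := by
        constructor
        rintro x ((⟨rfl, e⟩ | ⟨rfl, e⟩ | ⟨rfl, e⟩ | ⟨rfl, e⟩) | ⟨hx, hy, hadj⟩)
        · exact nv₀h e
        · exact nv₀h e.symm
        · exact nl₁m e
        · exact nl₁m e.symm
        · exact hadj.ne rfl }
  have hHadj : ∀ x y : V, H.Adj x y ↔
      ((x = v₀ ∧ y = h) ∨ (x = h ∧ y = v₀) ∨ (x = l₁ ∧ y = m) ∨ (x = m ∧ y = l₁)) ∨
      ∃ (hx : x ∈ Xᶜ) (hy : y ∈ Xᶜ), H'.Adj ⟨x, hx⟩ ⟨y, hy⟩ := fun _ _ => Iff.rfl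
  refine ⟨H, ?_, ?_, ?_⟩
  · -- H ≤ G
    rintro x y ((⟨rfl, rfl⟩ | ⟨rfl, rfl⟩ | ⟨rfl, rfl⟩ | ⟨rfl, rfl⟩) | ⟨hx, hy, hadj⟩)
    · exact a5
    · exact a5.symm
    · exact a7
    · exact a7.symm
    · exact hH'le hadj
  · -- max degree ≤ 1
    intro v
    by_cases hv : v ∈ X
    · have : ∃ p : V, H.neighborSet v ⊆ {p} := by
        have hv' : v = v₀ ∨ v = h ∨ v = l₁ ∨ v = m ∨ v = l₃ ∨ v = r₁ ∨ v = r₃ ∨ v = b := by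
          simpa [hXdef] using hv
        obtain e | e | e | e | e | e | e | e := hv'
        · refine ⟨h, ?_⟩
          rw [e]
          rintro w ((⟨_, rfl⟩ | ⟨e, _⟩ | ⟨e, _⟩ | ⟨e, _⟩) | ⟨hx, _, _⟩)
          · exact rfl
          · exact absurd e nv₀h
          · exact absurd e nv₀l₁
          · exact absurd e nv₀m
          · exact absurd hv₀X hx
        · refine ⟨v₀, ?_⟩
          rw [e]
          rintro w ((⟨e, _⟩ | ⟨_, rfl⟩ | ⟨e, _⟩ | ⟨e, _⟩) | ⟨hx, _, _⟩)
          · exact absurd e nv₀h.symm  -- e : h = v₀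
          · exact rfl
          · exact absurd e nhl₁
          · exact absurd e nhm
          · exact absurd hhX hx
        · refine ⟨m, ?_⟩
          rw [e]
          rintro w ((⟨e, _⟩ | ⟨e, _⟩ | ⟨_, rfl⟩ | ⟨e, _⟩) | ⟨hx, _, _⟩)
          · exact absurd e nv₀l₁.symm
          · exact absurd e nhl₁.symm
          · exact rfl
          · exact absurd e nl₁m
          · exact absurd hl₁X hx
        · refine ⟨l₁, ?_⟩
          rw [e]
          rintro w ((⟨e, _⟩ | ⟨e, _⟩ | ⟨e, _⟩ | ⟨_, rfl⟩) | ⟨hx, _, _⟩)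
          · exact absurd e nv₀m.symm
          · exact absurd e nhm.symm
          · exact absurd e nl₁m.symm
          · exact rfl
          · exact absurd hmX hx
        · refine ⟨l₃, ?_⟩
          rw [e]
          rintro w ((⟨e, _⟩ | ⟨e, _⟩ | ⟨e, _⟩ | ⟨e, _⟩) | ⟨hx, _, _⟩)
          · exact absurd e nv₀l₃.symm
          · exact absurd e nhl₃.symm
          · exact absurd e nl₁l₃.symm
          · exact absurd e nml₃.symm
          · exact absurd hl₃X hx
        · refine ⟨r₁, ?_⟩
          rw [e]
          rintro w ((⟨e, _⟩ | ⟨e, _⟩ | ⟨e, _⟩ | ⟨e, _⟩) | ⟨hx, _, _⟩)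
          · exact absurd e nv₀r₁.symm
          · exact absurd e nhr₁.symm
          · exact absurd e nl₁r₁.symm
          · exact absurd e nmr₁.symm
          · exact absurd hr₁X hx
        · refine ⟨r₃, ?_⟩
          rw [e]
          rintro w ((⟨e, _⟩ | ⟨e, _⟩ | ⟨e, _⟩ | ⟨e, _⟩) | ⟨hx, _, _⟩)
          · exact absurd e nv₀r₃.symm
          · exact absurd e nhr₃.symm
          · exact absurd e nl₁r₃.symm
          · exact absurd e nmr₃.symm
          · exact absurd hr₃X hx
        · refine ⟨b, ?_⟩
          rw [e]
          rintro w ((⟨e, _⟩ | ⟨e, _⟩ | ⟨e, _⟩ | ⟨e, _⟩) | ⟨hx, _, _⟩)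
          · exact absurd e nv₀b.symm
          · exact absurd e nhb.symm
          · exact absurd e nl₁b.symm
          · exact absurd e nmb.symm
          · exact absurd hbX hx
      obtain ⟨p, hp⟩ := this
      calc (H.neighborSet v).ncard ≤ ({p} : Set V).ncard :=
            Set.ncard_le_ncard hp (Set.toFinite _)
        _ = 1 := Set.ncard_singleton p
    · -- v ∉ X
      have hsub : H.neighborSet v ⊆ Subtype.val '' (H'.neighborSet ⟨v, hv⟩) := by
        rintro w ((⟨rfl, _⟩ | ⟨rfl, _⟩ | ⟨rfl, _⟩ | ⟨rfl, _⟩) | ⟨hx, hy, hadj⟩)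
        · exact absurd hv₀X hv
        · exact absurd hhX hv
        · exact absurd hl₁X hv
        · exact absurd hmX hv
        · exact ⟨⟨w, hy⟩, hadj, rfl⟩
      calc (H.neighborSet v).ncard
          ≤ (Subtype.val '' (H'.neighborSet ⟨v, hv⟩)).ncard :=
            Set.ncard_le_ncard hsub (Set.toFinite _)
        _ = (H'.neighborSet ⟨v, hv⟩).ncard :=
            Set.ncard_image_of_injective _ Subtype.val_injective
        _ ≤ 1 := hH'deg _
  · -- degeneracy
    intro S hS
    have bound1 : ∀ v a : V, G.Adj v a → (G.neighborSet v).ncard = 3 →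
        ∀ T : Set V, T ⊆ G.neighborSet v \ {a} → T.ncard ≤ 2 := by
      intro v a ha h3 T hT
      calc T.ncard ≤ (G.neighborSet v \ {a}).ncard :=
            Set.ncard_le_ncard hT (Set.toFinite _)
        _ = (G.neighborSet v).ncard - ({a} : Set V).ncard :=
            Set.ncard_diff (by simpa using ha) (Set.toFinite _)
        _ ≤ 2 := by rw [h3, Set.ncard_singleton]
    have bound2 : ∀ v a c : V, G.Adj v a → G.Adj v c → a ≠ c →
        (G.neighborSet v).ncard = 4 →
        ∀ T : Set V, T ⊆ G.neighborSet v \ {a, c} → T.ncard ≤ 2 := by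
      intro v a c ha hc hac h4 T hT
      calc T.ncard ≤ (G.neighborSet v \ {a, c}).ncard :=
            Set.ncard_le_ncard hT (Set.toFinite _)
        _ = (G.neighborSet v).ncard - ({a, c} : Set V).ncard :=
            Set.ncard_diff (by simp [Set.insert_subset_iff, ha, hc]) (Set.toFinite _)
        _ ≤ 2 := by rw [h4, Set.ncard_pair hac]
    by_cases hv₀S : v₀ ∈ S
    · refine ⟨v₀, hv₀S, bound1 v₀ h a5 hdv₀ _ ?_⟩
      rintro w ⟨hwS, hG, hnH⟩
      refine ⟨hG, ?_⟩
      simp only [Set.mem_singleton_iff]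
      rintro rfl
      exact hnH (Or.inl (Or.inl ⟨rfl, rfl⟩))
    · by_cases hl₁S : l₁ ∈ S
      · refine ⟨l₁, hl₁S, bound1 l₁ m a7 hdl₁ _ ?_⟩
        rintro w ⟨hwS, hG, hnH⟩
        refine ⟨hG, ?_⟩
        simp only [Set.mem_singleton_iff]
        rintro rfl
        exact hnH (Or.inl (Or.inr (Or.inr (Or.inl ⟨rfl, rfl⟩))))
      · by_cases hhS : h ∈ S
        · refine ⟨h, hhS, bound2 h v₀ l₁ a5.symm a6 nv₀l₁ hdh _ ?_⟩
          rintro w ⟨hwS, hG, _⟩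
          refine ⟨hG, ?_⟩
          simp only [Set.mem_insert_iff, Set.mem_singleton_iff]
          rintro (rfl | rfl)
          · exact hv₀S hwS
          · exact hl₁S hwS
        · by_cases hr₁S : r₁ ∈ S
          · refine ⟨r₁, hr₁S, bound1 r₁ h a9.symm hdr₁ _ ?_⟩
            rintro w ⟨hwS, hG, _⟩
            refine ⟨hG, ?_⟩
            simp only [Set.mem_singleton_iff]
            rintro rfl
            exact hhS hwS
          · by_cases hmS : m ∈ S
            · refine ⟨m, hmS, bound2 m l₁ r₁ a7.symm a10.symm nl₁r₁ hdm _ ?_⟩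
              rintro w ⟨hwS, hG, _⟩
              refine ⟨hG, ?_⟩
              simp only [Set.mem_insert_iff, Set.mem_singleton_iff]
              rintro (rfl | rfl)
              · exact hl₁S hwS
              · exact hr₁S hwS
            · by_cases hl₃S : l₃ ∈ S
              · refine ⟨l₃, hl₃S, bound2 l₃ v₀ m a1.symm a8.symm nv₀m hdl₃ _ ?_⟩
                rintro w ⟨hwS, hG, _⟩
                refine ⟨hG, ?_⟩
                simp only [Set.mem_insert_iff, Set.mem_singleton_iff]
                rintro (rfl | rfl)
                · exact hv₀S hwS
                · exact hmS hwS
              · by_cases hr₃S : r₃ ∈ S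
                · refine ⟨r₃, hr₃S, bound2 r₃ v₀ m a4 a11.symm nv₀m hdr₃ _ ?_⟩
                  rintro w ⟨hwS, hG, _⟩
                  refine ⟨hG, ?_⟩
                  simp only [Set.mem_insert_iff, Set.mem_singleton_iff]
                  rintro (rfl | rfl)
                  · exact hv₀S hwS
                  · exact hmS hwS
                · by_cases hbS : b ∈ S
                  · refine ⟨b, hbS, bound2 b l₃ r₃ a2.symm a3 nl₃r₃ hdb _ ?_⟩
                    rintro w ⟨hwS, hG, _⟩
                    refine ⟨hG, ?_⟩
                    simp only [Set.mem_insert_iff, Set.mem_singleton_iff]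
                    rintro (rfl | rfl)
                    · exact hl₃S hwS
                    · exact hr₃S hwS
                  · -- S ⊆ Xᶜ
                    have hSX : ∀ x ∈ S, x ∈ Xᶜ := by
                      intro x hx hxX
                      have : x = v₀ ∨ x = h ∨ x = l₁ ∨ x = m ∨ x = l₃ ∨ x = r₁ ∨
                          x = r₃ ∨ x = b := by simpa [hXdef] using hxX
                      obtain rfl | rfl | rfl | rfl | rfl | rfl | rfl | rfl := this
                      exacts [hv₀S hx, hhS hx, hl₁S hx, hmS hx, hl₃S hx, hr₁S hx,
                        hr₃S hx, hbS hx]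
                    set S' : Set ↥(Xᶜ) := {y : ↥(Xᶜ) | ↑y ∈ S} with hS'def
                    obtain ⟨s, hs⟩ := hS
                    obtain ⟨v, hvS', hv2⟩ := hH'dgn S' ⟨⟨s, hSX s hs⟩, hs⟩
                    refine ⟨↑v, hvS', ?_⟩
                    have hsub : S ∩ (G \ H).neighborSet ↑v ⊆
                        Subtype.val '' (S' ∩ (G.induce Xᶜ \ H').neighborSet v) := by
                      rintro w ⟨hwS, hG, hnH⟩
                      have hwX : w ∈ Xᶜ := hSX w hwS
                      refine ⟨⟨w, hwX⟩, ⟨hwS, hG, ?_⟩, rfl⟩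
                      intro hH'
                      exact hnH (Or.inr ⟨v.2, hwX, hH'⟩)
                    calc (S ∩ (G \ H).neighborSet ↑v).ncard
                        ≤ (Subtype.val '' (S' ∩ (G.induce Xᶜ \ H').neighborSet v)).ncard :=
                          Set.ncard_le_ncard hsub (Set.toFinite _)
                      _ = (S' ∩ (G.induce Xᶜ \ H').neighborSet v).ncard :=
                          Set.ncard_image_of_injective _ Subtype.val_injective
                      _ ≤ 2 := hv2
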